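/- For every i ≥ 2 and n = 2^i, there exists a solution w to the (n−2)-out-of-n picture-hanging puzzle whose length is exactly |w| = 6 · (i − 1) · 2^i (that is, 6 · n · (log₂ n − 1)). -/

import Mathlib

/-- The removal homomorphism: kills the generators with index in `S`. -/
def kill {n : ℕ} (S : Finset (Fin n)) : FreeGroup (Fin n) →* FreeGroup (Fin n) :=
  FreeGroup.lift fun i => if i ∈ S then 1 else FreeGroup.of i

/-- `w` is a solution to the `k`-out-of-`n` picture-hanging puzzle (Demaine convention). -/
def IsSolution {n : ℕ} (k : ℕ) (w : FreeGroup (Fin n)) : Prop :=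
  ∀ S : Finset (Fin n),
    (k ≤ S.card → kill S w = 1) ∧ (S.card < k → kill S w ≠ 1)

namespace PHaux

open scoped commutatorElement


abbrev Ltr := ℕ × Bool

def asc (o m : ℕ) (b : Bool) : List Ltr := (List.range' o m).map (fun t => (t, b))
def desc (o m : ℕ) (b : Bool) : List Ltr := ((List.range' o m).reverse).map (fun t => (t, b))
def linv (l : List Ltr) : List Ltr := (l.map (fun p => (p.1, !p.2))).reverse

def fw (o h : ℕ) : List Ltr :=
  asc o h true ++ asc o h false ++ asc (o+h) h true ++ desc o h true ++ desc o h false ++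
  desc (o+h) h false ++ asc o h true ++ asc (o+h) h true ++ asc (o+h) h false ++
  desc o h false ++ desc (o+h) h true ++ desc (o+h) h false

def W : ℕ → ℕ → List Ltr
  | 0, _ => []
  | 1, _ => []
  | s+2, o => W (s+1) o ++ W (s+1) (o + 2^(s+1)) ++ fw o (2^(s+1))

variable {G : Type*} [Group G]

def ev (v : ℕ → G) (l : List Ltr) : G := (l.map (fun p => cond p.2 (v p.1) (v p.1)⁻¹)).prod

@[simp] lemma ev_nil (v : ℕ → G) : ev v [] = 1 := rfl

@[simp] lemma ev_append (v : ℕ → G) (l1 l2 : List Ltr) :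
    ev v (l1 ++ l2) = ev v l1 * ev v l2 := by
  simp [ev]

@[simp] lemma ev_inv (v : ℕ → G) (l : List Ltr) : ev v (linv l) = (ev v l)⁻¹ := by
  induction l with
  | nil => simp [linv, ev]
  | cons p l ih =>
    have : linv (p :: l) = linv l ++ [(p.1, !p.2)] := by simp [linv]
    rw [this, ev_append, ih]
    have : ev v [(p.1, !p.2)] = (cond p.2 (v p.1) (v p.1)⁻¹)⁻¹ := by
      cases p.2 <;> simp [ev]
    rw [this]
    have : ev v (p :: l) = cond p.2 (v p.1) (v p.1)⁻¹ * ev v l := by simp [ev]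
    rw [this]
    group

lemma desc_eq_linv_asc (o m : ℕ) (b : Bool) : desc o m b = linv (asc o m (!b)) := by
  simp [desc, linv, asc, List.map_map, Function.comp]

lemma asc_succ (o m : ℕ) (b : Bool) : asc o (m+1) b = (o, b) :: asc (o+1) m b := by
  simp [asc, List.range'_succ]

lemma ev_cons (v : ℕ → G) (p : Ltr) (l : List Ltr) :
    ev v (p :: l) = (cond p.2 (v p.1) (v p.1)⁻¹) * ev v l := by simp [ev]

lemma ev_asc_dead (v : ℕ → G) {o m : ℕ} (b : Bool)
    (h : ∀ t, o ≤ t → t < o + m → v t = 1) : ev v (asc o m b) = 1 := by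
  induction m generalizing o with
  | zero => simp [asc]
  | succ m ih =>
    rw [asc_succ, ev_cons, ih (fun t h1 h2 => h t (by omega) (by omega)),
      h o (by omega) (by omega)]
    cases b <;> simp

lemma asc_split (a : ℕ) {o m : ℕ} (b : Bool) (ha : a ≤ m) :
    asc o m b = asc o a b ++ asc (o + a) (m - a) b := by
  simp only [asc, ← List.map_append]
  congr 1
  have := List.range'_append (s := o) (m := a) (n := m - a) (step := 1)
  simp only [one_mul] at this
  rw [this, Nat.add_sub_cancel' ha]

lemma asc_one (o : ℕ) (b : Bool) : asc o 1 b = [(o, b)] := by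
  simp [asc]

lemma ev_asc_single (v : ℕ → G) {o m j : ℕ} (b : Bool) (h1 : o ≤ j) (h2 : j < o + m)
    (h : ∀ t, o ≤ t → t < o + m → t ≠ j → v t = 1) :
    ev v (asc o m b) = cond b (v j) (v j)⁻¹ := by
  rw [asc_split (j - o) b (by omega), ev_append,
    ev_asc_dead v b (fun t h1 h2 => h t (by omega) (by omega) (by omega))]
  rw [show o + (j - o) = j by omega]
  rw [asc_split 1 b (by omega), ev_append, asc_one, ev_asc_dead v b
    (fun t ha hb => h t (by omega) (by omega) (by omega))]
  cases b <;> simp [ev]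

lemma ev_asc_pair (v : ℕ → G) {o m j k : ℕ} (b : Bool) (h1 : o ≤ j) (hjk : j < k)
    (h2 : k < o + m)
    (h : ∀ t, o ≤ t → t < o + m → t ≠ j → t ≠ k → v t = 1) :
    ev v (asc o m b) = cond b (v j * v k) ((v j)⁻¹ * (v k)⁻¹) := by
  rw [asc_split (k - o) b (by omega), ev_append]
  rw [ev_asc_single v b (j := j) h1 (by omega)
    (fun t ha hb hc => h t (by omega) (by omega) hc (by omega))]
  rw [show o + (k - o) = k by omega]
  rw [ev_asc_single v b (j := k) (by omega) (by omega)
    (fun t ha hb hc => h t (by omega) (by omega) (by omega) hc)]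
  cases b <;> simp

lemma ev_fw (v : ℕ → G) (o h : ℕ) :
    ev v (fw o h) = ⁅ev v (asc o h true) * ev v (asc o h false), ev v (asc (o+h) h true)⁆ *
      ⁅ev v (asc o h true), ev v (asc (o+h) h true) * ev v (asc (o+h) h false)⁆ := by
  simp only [fw, desc_eq_linv_asc, Bool.not_true, Bool.not_false, ev_append, ev_inv,
    commutatorElement_def]
  group


lemma evD_dead (v : ℕ → G) {o m : ℕ} (j : ℕ)
    (h : ∀ t, o ≤ t → t < o + m → t ≠ j → v t = 1) :
    ev v (asc o m true) * ev v (asc o m false) = 1 := by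
  by_cases hj : o ≤ j ∧ j < o + m
  · rw [ev_asc_single v true hj.1 hj.2 h, ev_asc_single v false hj.1 hj.2 h]
    simp
  · have h' : ∀ t, o ≤ t → t < o + m → v t = 1 := by
      intro t h1 h2
      exact h t h1 h2 (by omega)
    rw [ev_asc_dead v true h', ev_asc_dead v false h']
    simp

lemma evD_pair (v : ℕ → G) {o m j k : ℕ} (h1 : o ≤ j) (hjk : j < k) (h2 : k < o + m)
    (h : ∀ t, o ≤ t → t < o + m → t ≠ j → t ≠ k → v t = 1) :
    ev v (asc o m true) * ev v (asc o m false) = ⁅v j, v k⁆ := by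
  rw [ev_asc_pair v true h1 hjk h2 h, ev_asc_pair v false h1 hjk h2 h,
    commutatorElement_def]
  simp [mul_assoc]

lemma ev_W_one (s : ℕ) : ∀ (o : ℕ) (v : ℕ → G) (a b : ℕ),
    (∀ t, o ≤ t → t < o + 2^s → t ≠ a → t ≠ b → v t = 1) → ev v (W s o) = 1 := by
  induction s using Nat.strong_induction_on with
  | _ s IH =>
  obtain _|_|s := s
  · intro o v a b h; simp [W]
  · intro o v a b h; simp [W]
  · intro o v a b h
    have hpow : 2^(s+2) = 2^(s+1) + 2^(s+1) := by ring
    have hpos : 0 < 2^(s+1) := Nat.pow_pos (by norm_num)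
    rw [show W (s+2) o = W (s+1) o ++ W (s+1) (o + 2^(s+1)) ++ fw o (2^(s+1)) from rfl]
    rw [ev_append, ev_append]
    rw [IH (s+1) (by omega) o v a b (fun t h1 h2 => h t (by omega) (by omega)),
      IH (s+1) (by omega) (o + 2^(s+1)) v a b (fun t h1 h2 => h t (by omega) (by omega))]
    rw [ev_fw]
    set h' := 2^(s+1)
    by_cases hB1 : ∀ t, o + h' ≤ t → t < o + h' + h' → v t = 1
    · rw [ev_asc_dead v true hB1, ev_asc_dead v false hB1]
      simp
    · push_neg at hB1
      obtain ⟨t1, ht1a, ht1b, ht1v⟩ := hB1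
      have ht1ab : t1 = a ∨ t1 = b := by
        by_contra hc
        push_neg at hc
        exact ht1v (h t1 (by omega) (by omega) hc.1 hc.2)
      have hcover : ∀ t, o ≤ t → t < o + h' → t ≠ (if t1 = a then b else a) → v t = 1 := by
        intro t u1 u2 u3
        rcases ht1ab with rfl | rfl
        · simp only [if_pos rfl] at u3
          exact h t (by omega) (by omega) (by omega) u3
        · by_cases hab : t1 = a
          · exact h t (by omega) (by omega) (by omega) (by rw [if_pos hab] at u3; omega)
          · rw [if_neg hab] at u3
            exact h t (by omega) (by omega) u3 (by omega)
      rw [evD_dead v _ hcover]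
      rw [commutatorElement_def]
      by_cases hB0 : ∀ t, o ≤ t → t < o + h' → v t = 1
      · rw [ev_asc_dead v true hB0]
        simp
      · push_neg at hB0
        obtain ⟨t0, ht0a, ht0b, ht0v⟩ := hB0
        have ht0ab : t0 = a ∨ t0 = b := by
          by_contra hc
          push_neg at hc
          exact ht0v (h t0 (by omega) (by omega) hc.1 hc.2)
        have hB1dead : ∀ t, o + h' ≤ t → t < o + h' + h' → t ≠ t1 → v t = 1 := by
          intro t u1 u2 u3
          rcases ht0ab with rfl | rfl <;> rcases ht1ab with rfl | rfl
          · exact absurd ht0b (by omega)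
          · exact h t (by omega) (by omega) (by omega) u3
          · exact h t (by omega) (by omega) u3 (by omega)
          · exact absurd ht0b (by omega)
        rw [evD_dead v t1 hB1dead]
        simp


lemma ev_W_triple (s : ℕ) : ∀ (o : ℕ) (v : ℕ → G) (j k l : ℕ),
    o ≤ j → j < k → k < l → l < o + 2^s →
    (∀ t, o ≤ t → t < o + 2^s → t ≠ j → t ≠ k → t ≠ l → v t = 1) →
    ev v (W s o) = ⁅⁅v j, v k⁆, v l⁆ ∨ ev v (W s o) = ⁅v j, ⁅v k, v l⁆⁆ := by
  induction s using Nat.strong_induction_on with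
  | _ s IH =>
  obtain _|_|s := s
  · intro o v j k l h1 h2 h3 h4 hd; omega
  · intro o v j k l h1 h2 h3 h4 hd; omega
  · intro o v j k l h1 h2 h3 h4 hd
    have hpow : 2^(s+2) = 2^(s+1) + 2^(s+1) := by ring
    have hpos : 0 < 2^(s+1) := Nat.pow_pos (by norm_num)
    rw [show W (s+2) o = W (s+1) o ++ W (s+1) (o + 2^(s+1)) ++ fw o (2^(s+1)) from rfl]
    rw [ev_append, ev_append, ev_fw]
    set h' := 2^(s+1) with hh'
    rcases Nat.lt_or_ge l (o + h') with hcase | hcase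
    · -- all three in left half
      have hW1 : ev v (W (s+1) (o + h')) = 1 := by
        apply ev_W_one (s+1) (o + h') v o o
        intro t u1 u2 u3 u4
        exact hd t (by omega) (by omega) (by omega) (by omega) (by omega)
      have hA1 : ev v (asc (o+h') h' true) = 1 :=
        ev_asc_dead v true (fun t u1 u2 => hd t (by omega) (by omega) (by omega) (by omega) (by omega))
      have hB1 : ev v (asc (o+h') h' false) = 1 :=
        ev_asc_dead v false (fun t u1 u2 => hd t (by omega) (by omega) (by omega) (by omega) (by omega))
      rw [hW1, hA1, hB1]
      have hres := IH (s+1) (by omega) o v j k l h1 h2 h3 (by omega)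
        (fun t u1 u2 u3 u4 u5 => hd t (by omega) (by omega) u3 u4 u5)
      rcases hres with he | he <;> rw [he] <;> simp
    · rcases Nat.lt_or_ge j (o + h') with hcase2 | hcase2
      · rcases Nat.lt_or_ge k (o + h') with hcase3 | hcase3
        · -- j k left, l right : first commutator
          have hW0 : ev v (W (s+1) o) = 1 := by
            apply ev_W_one (s+1) o v j k
            intro t u1 u2 u3 u4
            exact hd t (by omega) (by omega) u3 u4 (by omega)
          have hW1 : ev v (W (s+1) (o + h')) = 1 := by
            apply ev_W_one (s+1) (o + h') v l l
            intro t u1 u2 u3 u4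
            exact hd t (by omega) (by omega) (by omega) (by omega) u3
          have hD0 : ev v (asc o h' true) * ev v (asc o h' false) = ⁅v j, v k⁆ :=
            evD_pair v h1 h2 hcase3
              (fun t u1 u2 u3 u4 => hd t (by omega) (by omega) u3 u4 (by omega))
          have hA1 : ev v (asc (o+h') h' true) = v l := by
            have := ev_asc_single v (o := o + h') (m := h') (j := l) true hcase (by omega)
              (fun t u1 u2 u3 => hd t (by omega) (by omega) (by omega) (by omega) u3)
            simpa using this
          have hD1 : ev v (asc (o+h') h' true) * ev v (asc (o+h') h' false) = 1 :=
            evD_dead v l (fun t u1 u2 u3 => hd t (by omega) (by omega) (by omega) (by omega) u3)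
          rw [hW0, hW1, hD0, hD1, hA1]
          left
          simp
        · -- j left, k l right : second commutator
          have hW0 : ev v (W (s+1) o) = 1 := by
            apply ev_W_one (s+1) o v j j
            intro t u1 u2 u3 u4
            exact hd t (by omega) (by omega) u3 (by omega) (by omega)
          have hW1 : ev v (W (s+1) (o + h')) = 1 := by
            apply ev_W_one (s+1) (o + h') v k l
            intro t u1 u2 u3 u4
            exact hd t (by omega) (by omega) (by omega) u3 u4
          have hD0 : ev v (asc o h' true) * ev v (asc o h' false) = 1 :=
            evD_dead v j (fun t u1 u2 u3 => hd t (by omega) (by omega) u3 (by omega) (by omega))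
          have hA0 : ev v (asc o h' true) = v j := by
            have := ev_asc_single v (o := o) (m := h') (j := j) true h1 (by omega)
              (fun t u1 u2 u3 => hd t (by omega) (by omega) u3 (by omega) (by omega))
            simpa using this
          have hD1 : ev v (asc (o+h') h' true) * ev v (asc (o+h') h' false) = ⁅v k, v l⁆ :=
            evD_pair v hcase3 h3 (by omega)
              (fun t u1 u2 u3 u4 => hd t (by omega) (by omega) (by omega) u3 u4)
          rw [hW0, hW1, hD0, hA0, hD1]
          right
          simp
      · -- all three right
        have hW0 : ev v (W (s+1) o) = 1 := by
          apply ev_W_one (s+1) o v o o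
          intro t u1 u2 u3 u4
          exact hd t (by omega) (by omega) (by omega) (by omega) (by omega)
        have hA0 : ev v (asc o h' true) = 1 :=
          ev_asc_dead v true (fun t u1 u2 => hd t (by omega) (by omega) (by omega) (by omega) (by omega))
        have hB0 : ev v (asc o h' false) = 1 :=
          ev_asc_dead v false (fun t u1 u2 => hd t (by omega) (by omega) (by omega) (by omega) (by omega))
        rw [hW0, hA0, hB0]
        have hres := IH (s+1) (by omega) (o + h') v j k l hcase2 h2 h3 (by omega)
          (fun t u1 u2 u3 u4 u5 => hd t (by omega) (by omega) u3 u4 u5)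
        rcases hres with he | he <;> rw [he] <;> simp


def Nice (l : List Ltr) (a z : Ltr) : Prop :=
  l.head? = some a ∧ l.getLast? = some z ∧ List.Chain' (fun p q : Ltr => p.1 ≠ q.1) l

lemma Nice.append {l1 l2 : List Ltr} {a z a' z' : Ltr} (h1 : Nice l1 a z)
    (h2 : Nice l2 a' z') (hza : z.1 ≠ a'.1) : Nice (l1 ++ l2) a z' := by
  obtain ⟨e1, e2, c1⟩ := h1
  obtain ⟨f1, f2, c2⟩ := h2
  refine ⟨?_, ?_, ?_⟩
  · rw [List.head?_append, e1]; rfl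
  · rw [List.getLast?_append, f2]; rfl
  · apply c1.append c2
    intro x hx y hy
    rw [e2, Option.mem_some_iff] at hx
    rw [f1, Option.mem_some_iff] at hy
    subst hx; subst hy; exact hza

lemma nice_single (o : ℕ) (b : Bool) : Nice [(o, b)] (o, b) (o, b) := by
  refine ⟨rfl, rfl, ?_⟩; exact List.isChain_singleton _

lemma nice_asc (m o : ℕ) (b : Bool) : Nice (asc o (m+1) b) (o, b) (o + m, b) := by
  induction m generalizing o with
  | zero => simpa [asc_one] using nice_single o b
  | succ m ih =>
    have : asc o (m+2) b = [(o, b)] ++ asc (o+1) (m+1) b := by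
      rw [asc_succ]; rfl
    rw [this]
    have := (nice_single o b).append (ih (o+1)) (by simp)
    rw [show o + 1 + m = o + (m+1) by omega] at this
    exact this

lemma desc_succ (o m : ℕ) (b : Bool) :
    desc o (m+1) b = desc (o+1) m b ++ [(o, b)] := by
  simp [desc, List.range'_succ]

lemma nice_desc (m o : ℕ) (b : Bool) : Nice (desc o (m+1) b) (o + m, b) (o, b) := by
  induction m generalizing o with
  | zero => simpa [desc_succ, desc] using nice_single o b
  | succ m ih =>
    rw [desc_succ]
    have := (ih (o+1)).append (nice_single o b) (by simp)
    rw [show o + 1 + m = o + (m+1) by omega] at this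
    exact this

lemma nice_fw (m' o : ℕ) : Nice (fw o (m'+2)) (o, true) (o + (m'+2), false) := by
  have a0t := nice_asc (m'+1) o true
  have a0f := nice_asc (m'+1) o false
  have a1t := nice_asc (m'+1) (o + (m'+2)) true
  have a1f := nice_asc (m'+1) (o + (m'+2)) false
  have d0t := nice_desc (m'+1) o true
  have d0f := nice_desc (m'+1) o false
  have d1t := nice_desc (m'+1) (o + (m'+2)) true
  have d1f := nice_desc (m'+1) (o + (m'+2)) false
  have n1 := a0t.append a0f (by show o + (m'+1) ≠ o; omega)
  have n2 := n1.append a1t (by show o + (m'+1) ≠ o + (m'+2); omega)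
  have n3 := n2.append d0t (by show o + (m'+2) + (m'+1) ≠ o + (m'+1); omega)
  have n4 := n3.append d0f (by show o ≠ o + (m'+1); omega)
  have n5 := n4.append d1f (by show o ≠ o + (m'+2) + (m'+1); omega)
  have n6 := n5.append a0t (by show o + (m'+2) ≠ o; omega)
  have n7 := n6.append a1t (by show o + (m'+1) ≠ o + (m'+2); omega)
  have n8 := n7.append a1f (by show o + (m'+2) + (m'+1) ≠ o + (m'+2); omega)
  have n9 := n8.append d0f (by show o + (m'+2) + (m'+1) ≠ o + (m'+1); omega)
  have n10 := n9.append d1t (by show o ≠ o + (m'+2) + (m'+1); omega)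
  have n11 := n10.append d1f (by show o + (m'+2) ≠ o + (m'+2) + (m'+1); omega)
  exact n11


lemma nice_W (s : ℕ) : ∀ o : ℕ, Nice (W (s+2) o) (o, true) (o + 2^(s+1), false) := by
  induction s with
  | zero =>
    intro o
    have : W 2 o = fw o 2 := by simp [W]
    rw [this]
    exact nice_fw 0 o
  | succ s ih =>
    intro o
    have hpow : 2^(s+2) = 2^(s+1) + 2^(s+1) := by ring
    have hpos : 0 < 2^(s+1) := Nat.pow_pos (by norm_num)
    have hW : W (s+3) o = W (s+2) o ++ W (s+2) (o + 2^(s+2)) ++ fw o (2^(s+2)) := rfl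
    rw [hW]
    obtain ⟨m', hm'⟩ : ∃ m', 2^(s+2) = m'+2 := ⟨2^(s+2) - 2, by omega⟩
    have n1 := (ih o).append (ih (o + 2^(s+2)))
      (by show o + 2^(s+1) ≠ o + 2^(s+2); omega)
    have n2 := n1.append (hm' ▸ nice_fw m' o)
      (by show o + 2^(s+2) + 2^(s+1) ≠ o; omega)
    exact n2

lemma len_fw (o h : ℕ) : (fw o h).length = 12 * h := by
  simp [fw, asc, desc]
  ring

lemma len_W (s : ℕ) : ∀ o : ℕ, (W (s+2) o).length = 6 * (s+1) * 2^(s+2) := by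
  induction s with
  | zero =>
    intro o
    have : W 2 o = fw o 2 := by simp [W]
    rw [this, len_fw]
    norm_num
  | succ s ih =>
    intro o
    have hW : W (s+3) o = W (s+2) o ++ W (s+2) (o + 2^(s+2)) ++ fw o (2^(s+2)) := rfl
    rw [hW]
    simp only [List.length_append, ih, len_fw]
    rw [show (s+1+2 : ℕ) = (s+2)+1 from rfl, pow_succ]
    ring

lemma mem_asc {p : Ltr} {o m : ℕ} {b : Bool} (h : p ∈ asc o m b) : o ≤ p.1 ∧ p.1 < o + m := by
  simp only [asc, List.mem_map] at h
  obtain ⟨t, ht, hEq⟩ := h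
  rw [List.mem_range'] at ht
  obtain ⟨i, hi, rfl⟩ := ht
  subst hEq
  simp; omega

lemma mem_desc {p : Ltr} {o m : ℕ} {b : Bool} (h : p ∈ desc o m b) : o ≤ p.1 ∧ p.1 < o + m := by
  simp only [desc, List.mem_map, List.mem_reverse] at h
  obtain ⟨t, ht, hEq⟩ := h
  rw [List.mem_range'] at ht
  obtain ⟨i, hi, rfl⟩ := ht
  subst hEq
  simp; omega

lemma mem_fw {p : Ltr} {o h : ℕ} (hp : p ∈ fw o h) : o ≤ p.1 ∧ p.1 < o + h + h := by
  simp only [fw, List.mem_append] at hp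
  rcases hp with ((((((((((hp|hp)|hp)|hp)|hp)|hp)|hp)|hp)|hp)|hp)|hp)|hp <;>
    first
      | (have := mem_asc hp; omega)
      | (have := mem_desc hp; omega)

lemma mem_W (s : ℕ) : ∀ o : ℕ, ∀ p ∈ W s o, o ≤ p.1 ∧ p.1 < o + 2^s := by
  induction s using Nat.strong_induction_on with
  | _ s IH =>
  obtain _|_|s := s
  · intro o p hp; simp [W] at hp
  · intro o p hp; simp [W] at hp
  · intro o p hp
    have hpow : 2^(s+2) = 2^(s+1) + 2^(s+1) := by ring
    rw [show W (s+2) o = W (s+1) o ++ W (s+1) (o + 2^(s+1)) ++ fw o (2^(s+1)) from rfl] at hp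
    simp only [List.mem_append] at hp
    rcases hp with (hp|hp)|hp
    · have := IH (s+1) (by omega) o p hp; omega
    · have := IH (s+1) (by omega) (o + 2^(s+1)) p hp; omega
    · have := mem_fw hp; omega

lemma chain'_of_mem {α : Type*} {R S : α → α → Prop} {l : List α}
    (hc : List.Chain' R l) (h : ∀ a ∈ l, ∀ b ∈ l, R a b → S a b) : List.Chain' S l := by
  simp only [List.Chain', List.isChain_iff_getElem] at hc ⊢
  intro i hi
  exact h _ (List.getElem_mem _) _ (List.getElem_mem _) (hc i hi)

lemma reduce_chain {α : Type*} [DecidableEq α] (L : List (α × Bool))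
    (hc : List.Chain' (fun a b : α × Bool => a.1 ≠ b.1) L) : FreeGroup.reduce L = L := by
  induction L with
  | nil => simp
  | cons x xs ih =>
    have hxs : FreeGroup.reduce xs = xs := ih hc.tail
    rw [FreeGroup.reduce.cons, hxs]
    cases xs with
    | nil => rfl
    | cons y ys =>
      have hxy : x.1 ≠ y.1 := (List.isChain_cons_cons.mp hc).1
      simp [hxy]


lemma ev_hom {H : Type*} [Group H] (F : G →* H) (v : ℕ → G) (l : List Ltr) :
    F (ev v l) = ev (fun t => F (v t)) l := by
  induction l with
  | nil => simp [ev]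
  | cons p l ih =>
    rw [ev_cons, map_mul, ih, ev_cons]
    congr 1
    cases p.2 <;> simp

lemma mk_ne_one {α : Type*} [DecidableEq α] {L : List (α × Bool)}
    (hc  : List.Chain' (fun a b : α × Bool => a.1 ≠ b.1) L) (hne : L ≠ []) :
    FreeGroup.mk L ≠ 1 := by
  intro h
  have : (FreeGroup.mk L).toWord = [] := by rw [h]; simp [FreeGroup.toWord_eq_nil_iff]
  rw [FreeGroup.toWord_mk, reduce_chain L hc] at this
  exact hne this

lemma comm3_left_ne_one {α : Type*} [DecidableEq α] {a b c : α}
    (hab : a ≠ b) (hbc : b ≠ c) (hac : a ≠ c) :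
    ⁅⁅(FreeGroup.of a), FreeGroup.of b⁆, FreeGroup.of c⁆ ≠ (1 : FreeGroup α) := by
  have h1 : ⁅⁅(FreeGroup.of a), FreeGroup.of b⁆, FreeGroup.of c⁆ =
      FreeGroup.mk [(a,true),(b,true),(a,false),(b,false),(c,true),
        (b,true),(a,true),(b,false),(a,false),(c,false)] := by
    rw [commutatorElement_def, commutatorElement_def]
    show FreeGroup.mk [(a,true)] * FreeGroup.mk [(b,true)] * (FreeGroup.mk [(a,true)])⁻¹ *
      (FreeGroup.mk [(b,true)])⁻¹ * FreeGroup.mk [(c,true)] *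
      (FreeGroup.mk [(a,true)] * FreeGroup.mk [(b,true)] * (FreeGroup.mk [(a,true)])⁻¹ *
      (FreeGroup.mk [(b,true)])⁻¹)⁻¹ * (FreeGroup.mk [(c,true)])⁻¹ = _
    simp only [FreeGroup.inv_mk, FreeGroup.mul_mk, FreeGroup.invRev]
    rfl
  rw [h1]
  apply mk_ne_one
  · simp only [List.Chain', List.isChain_cons_cons, List.isChain_singleton, and_true]
    refine ⟨hab, hab.symm, hab, hbc, hbc.symm, hab.symm, hab, hab.symm, hac⟩
  · simp

lemma comm3_right_ne_one {α : Type*} [DecidableEq α] {a b c : α}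
    (hab : a ≠ b) (hbc : b ≠ c) (hac : a ≠ c) :
    ⁅(FreeGroup.of a), ⁅FreeGroup.of b, FreeGroup.of c⁆⁆ ≠ (1 : FreeGroup α) := by
  have h1 : ⁅(FreeGroup.of a), ⁅FreeGroup.of b, FreeGroup.of c⁆⁆ =
      FreeGroup.mk [(a,true),(b,true),(c,true),(b,false),(c,false),
        (a,false),(c,true),(b,true),(c,false),(b,false)] := by
    rw [commutatorElement_def, commutatorElement_def]
    show FreeGroup.mk [(a,true)] * (FreeGroup.mk [(b,true)] * FreeGroup.mk [(c,true)] *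
      (FreeGroup.mk [(b,true)])⁻¹ * (FreeGroup.mk [(c,true)])⁻¹) * (FreeGroup.mk [(a,true)])⁻¹ *
      (FreeGroup.mk [(b,true)] * FreeGroup.mk [(c,true)] * (FreeGroup.mk [(b,true)])⁻¹ *
      (FreeGroup.mk [(c,true)])⁻¹)⁻¹ = _
    simp only [FreeGroup.inv_mk, FreeGroup.mul_mk, FreeGroup.invRev]
    rfl
  rw [h1]
  apply mk_ne_one
  · simp only [List.Chain', List.isChain_cons_cons, List.isChain_singleton, and_true]
    refine ⟨hab, hbc, hbc.symm, hbc, hac.symm, hac, hbc.symm, hbc, hbc.symm⟩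
  · simp

lemma exists_two_cover {β : Type*} [DecidableEq β] (s : Finset β) (d : β) (hs : s.card ≤ 2) :
    ∃ a b : β, ∀ x ∈ s, x = a ∨ x = b := by
  have h3 : s.card = 0 ∨ s.card = 1 ∨ s.card = 2 := by omega
  rcases h3 with h | h | h
  · rw [Finset.card_eq_zero] at h
    exact ⟨d, d, by simp [h]⟩
  · rw [Finset.card_eq_one] at h
    obtain ⟨a, rfl⟩ := h
    exact ⟨a, a, by simp⟩
  · rw [Finset.card_eq_two] at h
    obtain ⟨a, b, _, rfl⟩ := h
    exact ⟨a, b, by simp⟩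

end PHaux

theorem n_minus_two_out_of_n_solution (i : ℕ) (hi : 2 ≤ i) :
    ∃ w : FreeGroup (Fin (2 ^ i)), IsSolution (2 ^ i - 2) w ∧
      FreeGroup.norm w = 6 * (i - 1) * 2 ^ i := by
  obtain ⟨s, rfl⟩ : ∃ s, i = s + 2 := ⟨i - 2, by omega⟩
  set n := 2 ^ (s + 2) with hn
  have hnpos : 0 < n := Nat.pow_pos (by norm_num)
  have hn4 : 4 ≤ n := by
    have : 2 ^ 2 ≤ 2 ^ (s + 2) := Nat.pow_le_pow_right (by norm_num) (by omega)
    simpa using this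
  let fin : ℕ → Fin n := fun t => ⟨t % n, Nat.mod_lt t hnpos⟩
  have hfin : ∀ t, t < n → (fin t : ℕ) = t := fun t ht => Nat.mod_eq_of_lt ht
  set L0 := PHaux.W (s + 2) 0 with hL0
  set Lf : List (Fin n × Bool) := L0.map (fun p => (fin p.1, p.2)) with hLf
  set w : FreeGroup (Fin n) := FreeGroup.mk Lf with hw
  have hbounds : ∀ p ∈ L0, p.1 < n := by
    intro p hp
    have := PHaux.mem_W (s + 2) 0 p hp
    omega
  have hlift : ∀ (u : Fin n → FreeGroup (Fin n)),
      FreeGroup.lift u w = PHaux.ev (fun t => u (fin t)) L0 := by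
    intro u
    rw [hw, FreeGroup.lift_mk, hLf, List.map_map]
    rfl
  have hkill : ∀ (S : Finset (Fin n)) (x : FreeGroup (Fin n)),
      kill S x = FreeGroup.lift (fun i => if i ∈ S then 1 else FreeGroup.of i) x :=
    fun _ _ => rfl
  refine ⟨w, ?_, ?_⟩
  · intro S
    constructor
    · -- at most two generators survive
      intro hcard
      have hcompl : Sᶜ.card ≤ 2 := by
        have h1 : S.card ≤ n := by simpa using Finset.card_le_univ S
        have h2 := Finset.card_compl S
        rw [Fintype.card_fin] at h2
        omega
      obtain ⟨a, b, hab⟩ := PHaux.exists_two_cover Sᶜ ⟨0, hnpos⟩ hcompl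
      rw [hkill, hlift]
      apply PHaux.ev_W_one (s + 2) 0 _ a.val b.val
      intro t h1 h2 h3 h4
      have htn : t < n := by omega
      have hmem : fin t ∈ S := by
        by_contra hmem
        rcases hab _ (Finset.mem_compl.mpr hmem) with h | h
        · exact h3 (by rw [← hfin t htn, h])
        · exact h4 (by rw [← hfin t htn, h])
      simp [hmem]
    · -- at least three generators survive
      intro hcard
      have hcompl : 3 ≤ Sᶜ.card := by
        have h2 := Finset.card_compl S
        rw [Fintype.card_fin] at h2
        omega
      have key : ∀ (j k l : Fin n), j ∈ Sᶜ → k ∈ Sᶜ → l ∈ Sᶜ → j < k → k < l →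
          kill S w ≠ 1 := by
        intro j k l hj hk hl hjk hkl hone
        have hjk' : (j : ℕ) < k := hjk
        have hkl' : (k : ℕ) < l := hkl
        set ψv : Fin n → FreeGroup (Fin n) := fun x =>
          if x = j then FreeGroup.of j else if x = k then FreeGroup.of k
            else if x = l then FreeGroup.of l else 1 with hψv
        have h2 : FreeGroup.lift ψv (kill S w) = 1 := by rw [hone]; simp
        rw [hkill, hlift, PHaux.ev_hom] at h2
        set v' : ℕ → FreeGroup (Fin n) := fun t =>
          FreeGroup.lift ψv (if fin t ∈ S then 1 else FreeGroup.of (fin t)) with hv'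
        have hfj : fin j.val = j := Fin.ext (hfin _ j.isLt)
        have hfk : fin k.val = k := Fin.ext (hfin _ k.isLt)
        have hfl : fin l.val = l := Fin.ext (hfin _ l.isLt)
        have hv'j : v' j.val = FreeGroup.of j := by
          rw [hv']
          simp only [hfj, Finset.mem_compl.mp hj, if_neg (Finset.mem_compl.mp hj)]
          simp [hψv]
        have hv'k : v' k.val = FreeGroup.of k := by
          rw [hv']
          simp only [hfk, if_neg (Finset.mem_compl.mp hk)]
          have : k ≠ j := (ne_of_lt hjk).symm
          simp [hψv, this]
        have hv'l : v' l.val = FreeGroup.of l := by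
          rw [hv']
          simp only [hfl, if_neg (Finset.mem_compl.mp hl)]
          have h1 : l ≠ j := (ne_of_lt (hjk.trans hkl)).symm
          have h2 : l ≠ k := (ne_of_lt hkl).symm
          simp [hψv, h1, h2]
        have hdead : ∀ t, 0 ≤ t → t < 0 + 2 ^ (s + 2) → t ≠ j.val → t ≠ k.val → t ≠ l.val →
            v' t = 1 := by
          intro t u1 u2 u3 u4 u5
          have htn : t < n := by omega
          show (FreeGroup.lift ψv) (if fin t ∈ S then 1 else FreeGroup.of (fin t)) = 1
          by_cases hmem : fin t ∈ S
          · simp [hmem]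
          · rw [if_neg hmem]
            have e1 : fin t ≠ j := by
              intro h; apply u3; rw [← hfin t htn, h]
            have e2 : fin t ≠ k := by
              intro h; apply u4; rw [← hfin t htn, h]
            have e3 : fin t ≠ l := by
              intro h; apply u5; rw [← hfin t htn, h]
            simp [hψv, e1, e2, e3]
        have htrip := PHaux.ev_W_triple (s + 2) 0 v' j.val k.val l.val (by omega) hjk' hkl'
          (by have := l.isLt; omega) hdead
        rw [← hL0] at htrip
        have hjkne : j ≠ k := ne_of_lt hjk
        have hklne : k ≠ l := ne_of_lt hkl
        have hjlne : j ≠ l := ne_of_lt (hjk.trans hkl)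
        rcases htrip with he | he <;> rw [he, hv'j, hv'k, hv'l] at h2
        · exact PHaux.comm3_left_ne_one hjkne hklne hjlne h2
        · exact PHaux.comm3_right_ne_one hjkne hklne hjlne h2
      obtain ⟨T, hTsub, hTcard⟩ := Finset.exists_subset_card_eq hcompl
      rw [Finset.card_eq_three] at hTcard
      obtain ⟨x, y, z, hxy, hxz, hyz, rfl⟩ := hTcard
      have hx : x ∈ Sᶜ := hTsub (by simp)
      have hy : y ∈ Sᶜ := hTsub (by simp)
      have hz : z ∈ Sᶜ := hTsub (by simp)
      rcases lt_trichotomy x y with h1 | h1 | h1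
      · rcases lt_trichotomy y z with h2 | h2 | h2
        · exact key x y z hx hy hz h1 h2
        · exact absurd h2 hyz
        · rcases lt_trichotomy x z with h3 | h3 | h3
          · exact key x z y hx hz hy h3 h2
          · exact absurd h3 hxz
          · exact key z x y hz hx hy h3 h1
      · exact absurd h1 hxy
      · rcases lt_trichotomy x z with h2 | h2 | h2
        · exact key y x z hy hx hz h1 h2
        · exact absurd h2 hxz
        · rcases lt_trichotomy y z with h3 | h3 | h3
          · exact key y z x hy hz hx h3 h2
          · exact absurd h3 hyz
          · exact key z y x hz hy hx h3 h1
  · -- norm computation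
    have hchain0 := (PHaux.nice_W s 0).2.2
    rw [← hL0] at hchain0
    have hchain : List.Chain' (fun a b : Fin n × Bool => a.1 ≠ b.1) Lf := by
      rw [hLf, List.Chain', List.isChain_map]
      apply PHaux.chain'_of_mem hchain0
      intro a ha b hb hne
      intro hcontra
      apply hne
      have hv : (fin a.1 : ℕ) = (fin b.1 : ℕ) := congrArg Fin.val hcontra
      rw [hfin _ (hbounds a ha), hfin _ (hbounds b hb)] at hv
      exact hv
    have hnorm : FreeGroup.norm w = Lf.length := by
      show (w.toWord).length = _
      rw [hw, FreeGroup.toWord_mk, PHaux.reduce_chain _ hchain]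
    rw [hnorm, hLf, List.length_map, hL0, PHaux.len_W]
    have : s + 2 - 1 = s + 1 := rfl
    rw [this]
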